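/- In the setting of the previous statement, for every ℓ ∈ {1,…,r}, the weighted projection error satisfies ∑_{j=1}^n αⱼ ‖yⱼ − ∑_{i=1}^ℓ ⟨yⱼ, Ψᵢ⟩_X Ψᵢ‖²_X = ∑_{i=ℓ+1}^r λᵢ. -/
import Mathlib


open RealInnerProductSpace

/-- POD projection error formula: the weighted squared error of projecting the snapshots
onto the first `ℓ` POD modes equals the sum of the remaining eigenvalues. -/
theorem stmt7 {X : Type*} [NormedAddCommGroup X] [InnerProductSpace ℝ X] [CompleteSpace X]
    {n r : ℕ} (y : Fin n → X) (α : Fin n → ℝ) (hα : ∀ j, 0 < α j)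
    (Ψ : Fin r → X) (lam : Fin r → ℝ)
    (horth : Orthonormal ℝ Ψ)
    (hpos : ∀ i, 0 < lam i)
    (hmono : ∀ i j : Fin r, i ≤ j → lam j ≤ lam i)
    (heig : ∀ i, (∑ j, (α j * ⟪Ψ i, y j⟫) • y j) = lam i • Ψ i)
    (hspan : Submodule.span ℝ (Set.range y) = Submodule.span ℝ (Set.range Ψ)) :
    ∀ ℓ : ℕ, 1 ≤ ℓ → ℓ ≤ r →
      (∑ j, α j * ‖y j - ∑ i : Fin r, if (i : ℕ) < ℓ then ⟪y j, Ψ i⟫ • Ψ i else 0‖ ^ 2) =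
        ∑ i : Fin r, if ℓ ≤ (i : ℕ) then lam i else 0 := by
  -- Expansion of each snapshot in the orthonormal basis of the snapshot space
  have hy : ∀ j, y j = ∑ i : Fin r, ⟪y j, Ψ i⟫ • Ψ i := by
    intro j
    have hmem : y j ∈ Submodule.span ℝ (Set.range Ψ) := by
      rw [← hspan]; exact Submodule.subset_span (Set.mem_range_self j)
    obtain ⟨c, hc⟩ := (Finsupp.mem_span_range_iff_exists_finsupp).mp hmem
    rw [Finsupp.sum_fintype] at hc
    · rw [← hc]
      congr 1; funext i
      congr 1
      rw [real_inner_comm, horth.inner_right_fintype]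
    · intro i; simp
  -- eigenvalue identity: ∑ j, α j * ⟪Ψ i, y j⟫ ^ 2 = lam i
  have heval : ∀ i, (∑ j, α j * ⟪Ψ i, y j⟫ ^ 2) = lam i := by
    intro i
    have := congrArg (fun v => ⟪v, Ψ i⟫) (heig i)
    simp only [sum_inner, inner_smul_left, real_inner_self_eq_norm_sq,
      RCLike.star_def, starRingEnd_apply, star_trivial] at this
    rw [horth.1 i, one_pow, mul_one] at this
    rw [← this]
    refine Finset.sum_congr rfl fun j _ => ?_
    rw [real_inner_comm (y j) (Ψ i)]
    ring
  intro ℓ _ _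
  -- rewrite the residual as the tail of the expansion
  have hres : ∀ j, y j - (∑ i : Fin r, if (i : ℕ) < ℓ then ⟪y j, Ψ i⟫ • Ψ i else 0)
      = ∑ i : Fin r, (if ℓ ≤ (i : ℕ) then ⟪y j, Ψ i⟫ else 0) • Ψ i := by
    intro j
    rw [sub_eq_iff_eq_add, ← Finset.sum_add_distrib]
    conv_lhs => rw [hy j]
    refine Finset.sum_congr rfl fun i _ => ?_
    by_cases h : (i : ℕ) < ℓ
    · simp [h, Nat.not_le.mpr h]
    · simp [h, Nat.le_of_not_lt h]
  have hnorm : ∀ j, ‖y j - (∑ i : Fin r, if (i : ℕ) < ℓ then ⟪y j, Ψ i⟫ • Ψ i else 0)‖ ^ 2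
      = ∑ i : Fin r, (if ℓ ≤ (i : ℕ) then ⟪y j, Ψ i⟫ ^ 2 else 0) := by
    intro j
    rw [hres j, ← real_inner_self_eq_norm_sq,
      horth.inner_sum (fun i => if ℓ ≤ (i : ℕ) then ⟪y j, Ψ i⟫ else 0)
        (fun i => if ℓ ≤ (i : ℕ) then ⟪y j, Ψ i⟫ else 0)]
    refine Finset.sum_congr rfl fun i _ => ?_
    by_cases h : ℓ ≤ (i : ℕ) <;> simp [h, sq]
  calc (∑ j, α j * ‖y j - ∑ i : Fin r, if (i : ℕ) < ℓ then ⟪y j, Ψ i⟫ • Ψ i else 0‖ ^ 2)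
      = ∑ j, ∑ i : Fin r, (if ℓ ≤ (i : ℕ) then α j * ⟪y j, Ψ i⟫ ^ 2 else 0) := by
        refine Finset.sum_congr rfl fun j _ => ?_
        rw [hnorm j, Finset.mul_sum]
        refine Finset.sum_congr rfl fun i _ => ?_
        by_cases h : ℓ ≤ (i : ℕ) <;> simp [h]
    _ = ∑ i : Fin r, (if ℓ ≤ (i : ℕ) then ∑ j, α j * ⟪y j, Ψ i⟫ ^ 2 else 0) := by
        rw [Finset.sum_comm]
        refine Finset.sum_congr rfl fun i _ => ?_
        by_cases h : ℓ ≤ (i : ℕ) <;> simp [h]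
    _ = ∑ i : Fin r, if ℓ ≤ (i : ℕ) then lam i else 0 := by
        refine Finset.sum_congr rfl fun i _ => ?_
        by_cases h : ℓ ≤ (i : ℕ)
        · simp only [h, if_true]
          rw [← heval i]
          exact Finset.sum_congr rfl fun j _ => by rw [real_inner_comm]
        · simp [h]
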